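/- Under the setup of the previous statement, for any distinct v, v̂ ∈ V^n and any x, x̂ ∈ X^m, Pr{Φ(v̂) = x̂ | Φ(v) = x} = β(F_n,q_n)(v,v̂,x,x̂) · P_{X^m|V^n}(x̂|v̂), where P_{X^m|V^n}(x|v) = |q_n^{-1}(v,x)|/|U|^l and β(F_n,q_n)(v,v̂,x,x̂) = ∑_{u ∈ q_n^{-1}(v,x), û ∈ q_n^{-1}(v̂,x̂)} α(F_n)(P_{v̂−v}, P_{û−u}) / (|q_n^{-1}(v,x)| · |q_n^{-1}(v̂,x̂)|). -/

import Mathlib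

open Finset Filter

open scoped Classical

noncomputable def empDist {X : Type*} [Fintype X] {n : ℕ} (x : Fin n → X) : X → ℝ :=
  fun a => ((univ.filter fun i => x i = a).card : ℝ) / n

noncomputable def specS {X : Type*} [Fintype X] {n : ℕ}
    (A : Finset (Fin n → X)) (P : X → ℝ) : ℝ :=
  ((A.filter fun x => empDist x = P).card : ℝ) / (A.card : ℝ)

noncomputable def jointSpec {X Y : Type*} [Fintype X] [Fintype Y] {n m : ℕ}
    (f : (Fin n → X) → (Fin m → Y)) (P : X → ℝ) (Q : Y → ℝ) : ℝ :=
  ((univ.filter fun x : Fin n → X => empDist x = P ∧ empDist (f x) = Q).card : ℝ) /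
    ((Fintype.card X : ℝ) ^ n)

noncomputable def fullJointSpec (X Y : Type*) [Fintype X] [Fintype Y] (n m : ℕ)
    (P : X → ℝ) (Q : Y → ℝ) : ℝ :=
  specS (univ : Finset (Fin n → X)) P * specS (univ : Finset (Fin m → Y)) Q

noncomputable def alphaE {X Y : Type*} [Fintype X] [Fintype Y] {n m : ℕ} {Ω : Type*}
    [Fintype Ω] (μ : Ω → ℝ) (F : Ω → (Fin n → X) → (Fin m → Y))
    (P : X → ℝ) (Q : Y → ℝ) : ℝ :=
  (∑ ω, μ ω * jointSpec (F ω) P Q) / fullJointSpec X Y n m P Q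

def permAct {X : Type*} {n : ℕ} (σ : Equiv.Perm (Fin n)) (x : Fin n → X) : Fin n → X :=
  fun i => x (σ.symm i)

noncomputable def entH {X : Type*} [Fintype X] (P : X → ℝ) : ℝ :=
  ∑ a, -(P a * Real.log (P a))

noncomputable def binEnt (x : ℝ) : ℝ := -(x * Real.log x) - (1 - x) * Real.log (1 - x)

noncomputable def prPhi {V U Xc : Type*} [Fintype V] [Fintype U] [Fintype Xc]
    [AddCommGroup V] [AddCommGroup U] {n l k : ℕ} {Ω : Type*} [Fintype Ω] (μ : Ω → ℝ)
    (F : Ω → ((Fin n → V) →+ (Fin l → U)))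
    (q : (Fin n → V) → (Fin l → U) → (Fin k → Xc))
    (v : Fin n → V) (x : Fin k → Xc) : ℝ :=
  ∑ ω, ∑ σ : Equiv.Perm (Fin n), ∑ τ : Equiv.Perm (Fin l), ∑ b : Fin l → U,
    μ ω / ((Fintype.card (Equiv.Perm (Fin n)) : ℝ) * (Fintype.card (Equiv.Perm (Fin l)) : ℝ) *
        (Fintype.card (Fin l → U) : ℝ)) *
      (if q v (permAct τ (F ω (permAct σ v)) + b) = x then 1 else 0)

noncomputable def prPhi2 {V U Xc : Type*} [Fintype V] [Fintype U] [Fintype Xc]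
    [AddCommGroup V] [AddCommGroup U] {n l k : ℕ} {Ω : Type*} [Fintype Ω] (μ : Ω → ℝ)
    (F : Ω → ((Fin n → V) →+ (Fin l → U)))
    (q : (Fin n → V) → (Fin l → U) → (Fin k → Xc))
    (v v' : Fin n → V) (x x' : Fin k → Xc) : ℝ :=
  ∑ ω, ∑ σ : Equiv.Perm (Fin n), ∑ τ : Equiv.Perm (Fin l), ∑ b : Fin l → U,
    μ ω / ((Fintype.card (Equiv.Perm (Fin n)) : ℝ) * (Fintype.card (Equiv.Perm (Fin l)) : ℝ) *
        (Fintype.card (Fin l → U) : ℝ)) *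
      (if q v (permAct τ (F ω (permAct σ v)) + b) = x ∧
          q v' (permAct τ (F ω (permAct σ v')) + b) = x' then 1 else 0)

set_option linter.unusedSectionVars false
set_option maxHeartbeats 1000000

section Aux
variable {α : Type*} [Fintype α] {m : ℕ}

lemma permAct_mul (a b : Equiv.Perm (Fin m)) (x : Fin m → α) :
    permAct (a * b) x = permAct a (permAct b x) := rfl

lemma permAct_one (x : Fin m → α) : permAct (1 : Equiv.Perm (Fin m)) x = x := rfl

lemma permAct_inv_eq_iff (a : Equiv.Perm (Fin m)) (x y : Fin m → α) :
    permAct a⁻¹ x = y ↔ x = permAct a y := by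
  constructor
  · intro h; rw [← h, ← permAct_mul, mul_inv_cancel, permAct_one]
  · intro h; rw [h, ← permAct_mul, inv_mul_cancel, permAct_one]

lemma empDist_permAct (σ : Equiv.Perm (Fin m)) (d : Fin m → α) :
    empDist (permAct σ d) = empDist d := by
  funext a
  unfold empDist permAct
  congr 2
  exact Finset.card_equiv σ.symm (by simp)

lemma exists_perm_of_empDist_eq {z w : Fin m → α} (h : empDist z = empDist w) :
    ∃ σ : Equiv.Perm (Fin m), permAct σ w = z := by
  rcases Nat.eq_zero_or_pos m with hm | hm
  · subst hm; exact ⟨1, Subsingleton.elim _ _⟩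
  · have hc : ∀ a, (univ.filter fun i => z i = a).card = (univ.filter fun i => w i = a).card := by
      intro a
      have h2 := congrFun h a
      unfold empDist at h2
      have hm' : (m : ℝ) ≠ 0 := by positivity
      field_simp at h2
      exact_mod_cast h2
    have e : ∀ a, {i // z i = a} ≃ {i // w i = a} := fun a =>
      Fintype.equivOfCardEq (by simpa [Fintype.card_subtype] using hc a)
    refine ⟨(Equiv.ofFiberEquiv e).symm, ?_⟩
    funext i
    simpa [permAct] using Equiv.ofFiberEquiv_map e i

noncomputable def stabC (d : Fin m → α) : ℕ :=
  (univ.filter fun σ : Equiv.Perm (Fin m) => permAct σ d = d).card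

noncomputable def tC (d : Fin m → α) : ℕ :=
  (univ.filter fun z : Fin m → α => empDist z = empDist d).card

lemma stabC_pos (d : Fin m → α) : 0 < stabC d :=
  Finset.card_pos.2 ⟨1, by simp [permAct_one, stabC]⟩

lemma tC_pos (d : Fin m → α) : 0 < tC d :=
  Finset.card_pos.2 ⟨d, by simp [tC]⟩

lemma fiber_card (d z : Fin m → α) :
    (univ.filter fun σ : Equiv.Perm (Fin m) => permAct σ d = z).card
      = if empDist z = empDist d then stabC d else 0 := by
  split_ifs with h
  · obtain ⟨σ0, hσ0⟩ := exists_perm_of_empDist_eq h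
    refine Finset.card_equiv (Equiv.mulLeft σ0⁻¹) ?_
    intro σ
    simp only [mem_filter, mem_univ, true_and, Equiv.coe_mulLeft]
    rw [permAct_mul, permAct_inv_eq_iff, hσ0, eq_comm]
  · rw [Finset.card_eq_zero, Finset.filter_eq_empty_iff]
    intro σ _ hσ
    exact h (hσ ▸ empDist_permAct σ d)

lemma stab_mul_tC (d : Fin m → α) :
    stabC d * tC d = Fintype.card (Equiv.Perm (Fin m)) := by
  have h := Finset.card_eq_sum_card_fiberwise
      (s := (univ : Finset (Equiv.Perm (Fin m)))) (t := univ)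
      (f := fun σ => permAct σ d) (fun _ _ => mem_univ _)
  rw [← Fintype.card] at h
  rw [h, Finset.sum_congr rfl fun z _ => fiber_card d z, Finset.sum_ite, Finset.sum_const,
    Finset.sum_const_zero, add_zero, smul_eq_mul, mul_comm]
  rfl

lemma fiber_card' (w e : Fin m → α) :
    (univ.filter fun τ : Equiv.Perm (Fin m) => permAct τ w = e).card
      = if empDist w = empDist e then stabC e else 0 := by
  have h : (univ.filter fun τ : Equiv.Perm (Fin m) => permAct τ w = e).card
      = (univ.filter fun τ : Equiv.Perm (Fin m) => permAct τ e = w).card := by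
    refine Finset.card_equiv (Equiv.inv _) ?_
    intro τ
    simp only [mem_filter, mem_univ, true_and, Equiv.inv_apply]
    rw [permAct_inv_eq_iff, eq_comm]
  rw [h, fiber_card]

lemma sum_permAct (d : Fin m → α) (f : (Fin m → α) → ℝ) :
    ∑ σ : Equiv.Perm (Fin m), f (permAct σ d)
      = (stabC d : ℝ) * ∑ z ∈ univ.filter (fun z : Fin m → α => empDist z = empDist d), f z := by
  rw [← Finset.sum_fiberwise' univ (fun σ => permAct σ d) f]
  have h : ∀ z : Fin m → α,
      (∑ _σ ∈ univ.filter (fun σ : Equiv.Perm (Fin m) => permAct σ d = z), f z)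
        = (if empDist z = empDist d then (stabC d : ℝ) else 0) * f z := by
    intro z
    rw [Finset.sum_const, fiber_card]
    split_ifs <;> simp
  rw [Finset.sum_congr rfl fun z _ => h z]
  simp only [ite_mul, zero_mul]
  rw [Finset.sum_ite, Finset.sum_const_zero, add_zero, ← Finset.mul_sum]

lemma sum_swap4 {ι1 ι2 ι3 ι4 : Type*} (s1 : Finset ι1) (s2 : Finset ι2) (s3 : Finset ι3)
    (s4 : Finset ι4) (f : ι1 → ι2 → ι3 → ι4 → ℝ) :
    ∑ a ∈ s1, ∑ b ∈ s2, ∑ c ∈ s3, ∑ e ∈ s4, f a b c e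
      = ∑ c ∈ s3, ∑ e ∈ s4, ∑ a ∈ s1, ∑ b ∈ s2, f a b c e := by
  calc ∑ a ∈ s1, ∑ b ∈ s2, ∑ c ∈ s3, ∑ e ∈ s4, f a b c e
      = ∑ a ∈ s1, ∑ c ∈ s3, ∑ b ∈ s2, ∑ e ∈ s4, f a b c e :=
        Finset.sum_congr rfl fun a _ => Finset.sum_comm
    _ = ∑ c ∈ s3, ∑ a ∈ s1, ∑ b ∈ s2, ∑ e ∈ s4, f a b c e := Finset.sum_comm
    _ = ∑ c ∈ s3, ∑ a ∈ s1, ∑ e ∈ s4, ∑ b ∈ s2, f a b c e :=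
        Finset.sum_congr rfl fun c _ => Finset.sum_congr rfl fun a _ => Finset.sum_comm
    _ = ∑ c ∈ s3, ∑ e ∈ s4, ∑ a ∈ s1, ∑ b ∈ s2, f a b c e :=
        Finset.sum_congr rfl fun c _ => Finset.sum_comm

end Aux

section Main
variable {V U Xc : Type*} [Fintype V] [Fintype U] [Fintype Xc]
    [AddCommGroup V] [AddCommGroup U] {n l k : ℕ} {Ω : Type*} [Fintype Ω]

lemma sum_shift_ind {G : Type*} [Fintype G] [AddCommGroup G] (c : G) (p : G → Prop)
    [DecidablePred p] :
    (∑ b : G, if p (c + b) then (1:ℝ) else 0) = ((univ.filter fun u : G => p u).card : ℝ) := by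
  rw [Fintype.sum_equiv (Equiv.addLeft c) _ (fun u => if p u then (1:ℝ) else 0)
    (fun b => by simp; congr)]
  simp [Finset.sum_boole]

lemma prPhi_eq (μ : Ω → ℝ) (hμ1 : ∑ ω, μ ω = 1)
    (F : Ω → ((Fin n → V) →+ (Fin l → U)))
    (q : (Fin n → V) → (Fin l → U) → (Fin k → Xc))
    (v : Fin n → V) (x : Fin k → Xc) :
    prPhi μ F q v x
      = ((univ.filter fun u : Fin l → U => q v u = x).card : ℝ) / (Fintype.card U : ℝ) ^ l := by
  unfold prPhi
  have hPn : (0:ℝ) < (Fintype.card (Equiv.Perm (Fin n)) : ℝ) := by positivity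
  have hPl : (0:ℝ) < (Fintype.card (Equiv.Perm (Fin l)) : ℝ) := by positivity
  have hUl : (0:ℝ) < (Fintype.card (Fin l → U) : ℝ) := by positivity
  have key : ∀ ω, ∑ σ : Equiv.Perm (Fin n), ∑ τ : Equiv.Perm (Fin l), ∑ b : Fin l → U,
      μ ω / ((Fintype.card (Equiv.Perm (Fin n)) : ℝ) * (Fintype.card (Equiv.Perm (Fin l)) : ℝ) *
          (Fintype.card (Fin l → U) : ℝ)) *
        (if q v (permAct τ (F ω (permAct σ v)) + b) = x then 1 else 0)
      = μ ω * (((univ.filter fun u : Fin l → U => q v u = x).card : ℝ)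
          / (Fintype.card (Fin l → U) : ℝ)) := by
    intro ω
    have hb : ∀ (σ : Equiv.Perm (Fin n)) (τ : Equiv.Perm (Fin l)),
        (∑ b : Fin l → U, if q v (permAct τ (F ω (permAct σ v)) + b) = x then (1:ℝ) else 0)
          = ((univ.filter fun u : Fin l → U => q v u = x).card : ℝ) := fun σ τ =>
      sum_shift_ind (permAct τ (F ω (permAct σ v))) (fun u => q v u = x)
    simp only [← Finset.mul_sum, hb, Finset.sum_const, Finset.card_univ, nsmul_eq_mul]
    field_simp
  rw [Finset.sum_congr rfl fun ω _ => key ω, ← Finset.sum_mul, hμ1, one_mul]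
  congr 1
  simp [Fintype.card_fun]

lemma prPhi2_eq (μ : Ω → ℝ)
    (F : Ω → ((Fin n → V) →+ (Fin l → U)))
    (q : (Fin n → V) → (Fin l → U) → (Fin k → Xc))
    (v v' : Fin n → V) (x x' : Fin k → Xc) :
    prPhi2 μ F q v v' x x'
      = ∑ u ∈ univ.filter (fun u : Fin l → U => q v u = x),
          ∑ u' ∈ univ.filter (fun u : Fin l → U => q v' u = x'),
            (stabC (v' - v) : ℝ) * (stabC (u' - u) : ℝ) *
              (∑ ω, μ ω * ((univ.filter fun z : Fin n → V =>
                  empDist z = empDist (v' - v) ∧ empDist (F ω z) = empDist (u' - u)).card : ℝ))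
            / ((Fintype.card (Equiv.Perm (Fin n)) : ℝ) *
                (Fintype.card (Equiv.Perm (Fin l)) : ℝ) * (Fintype.card (Fin l → U) : ℝ)) := by
  unfold prPhi2
  set A := univ.filter (fun u : Fin l → U => q v u = x) with hAdef
  set A' := univ.filter (fun u : Fin l → U => q v' u = x') with hA'def
  have hA : ∀ ω (σ : Equiv.Perm (Fin n)) (τ : Equiv.Perm (Fin l)),
      (∑ b : Fin l → U, if q v (permAct τ (F ω (permAct σ v)) + b) = x ∧
          q v' (permAct τ (F ω (permAct σ v')) + b) = x' then (1:ℝ) else 0)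
      = ∑ u ∈ A, ∑ u' ∈ A',
          (if permAct τ (F ω (permAct σ (v' - v))) = u' - u then (1:ℝ) else 0) := by
    intro ω σ τ
    set c := permAct τ (F ω (permAct σ v)) with hc
    set t := permAct τ (F ω (permAct σ (v' - v))) with ht
    have hsplit : permAct τ (F ω (permAct σ v')) = c + t := by
      rw [hc, ht]
      have h1 : permAct σ v' = permAct σ v + permAct σ (v' - v) := by
        funext i; simp [permAct]
      rw [h1, map_add]
      rfl
    rw [hsplit]
    have hstep : ∀ b : Fin l → U,
        (if q v (c + b) = x ∧ q v' (c + t + b) = x' then (1:ℝ) else 0)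
          = (fun u => if q v u = x ∧ q v' (t + u) = x' then (1:ℝ) else 0)
              ((Equiv.addLeft c) b) := by
      intro b
      simp only [Equiv.coe_addLeft]
      have : c + t + b = t + (c + b) := by abel
      rw [this]
      congr
    rw [Fintype.sum_equiv (Equiv.addLeft c) _
      (fun u => if q v u = x ∧ q v' (t + u) = x' then (1:ℝ) else 0) hstep]
    have hAfilter : ∀ u : Fin l → U,
        (∑ u' ∈ A', (if t = u' - u then (1:ℝ) else 0))
          = (if q v' (t + u) = x' then (1:ℝ) else 0) := by
      intro u
      have : ∀ u' : Fin l → U, (t = u' - u) ↔ (u' = t + u) := by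
        intro u'; rw [eq_comm, sub_eq_iff_eq_add]
      simp only [this]
      rw [Finset.sum_ite_eq' A' (t + u) (fun _ => (1:ℝ))]
      simp [hA'def]
    calc (∑ u : Fin l → U, if q v u = x ∧ q v' (t + u) = x' then (1:ℝ) else 0)
        = ∑ u ∈ A, (if q v' (t + u) = x' then (1:ℝ) else 0) := by
          rw [hAdef, Finset.sum_filter]
          exact Finset.sum_congr rfl fun u _ => by
            by_cases h1 : q v u = x <;> by_cases h2 : q v' (t + u) = x' <;> simp [h1, h2]
      _ = ∑ u ∈ A, ∑ u' ∈ A', (if t = u' - u then (1:ℝ) else 0) :=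
          Finset.sum_congr rfl fun u _ => (hAfilter u).symm
  have hN : ∀ ω (e : Fin l → U),
      (∑ σ : Equiv.Perm (Fin n), ∑ τ : Equiv.Perm (Fin l),
          if permAct τ (F ω (permAct σ (v' - v))) = e then (1:ℝ) else 0)
        = (stabC (v' - v) : ℝ) * (stabC e : ℝ) *
            ((univ.filter fun z : Fin n → V =>
                empDist z = empDist (v' - v) ∧ empDist (F ω z) = empDist e).card : ℝ) := by
    intro ω e
    have hτ : ∀ w : Fin l → U,
        (∑ τ : Equiv.Perm (Fin l), if permAct τ w = e then (1:ℝ) else 0)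
          = if empDist w = empDist e then (stabC e : ℝ) else 0 := by
      intro w
      rw [Finset.sum_boole, fiber_card' w e]
      split_ifs <;> simp
    rw [Finset.sum_congr rfl fun σ _ => hτ _,
      sum_permAct (v' - v) (fun z => if empDist (F ω z) = empDist e then (stabC e : ℝ) else 0),
      Finset.sum_ite, Finset.sum_const, Finset.sum_const_zero, add_zero, Finset.filter_filter,
      nsmul_eq_mul]
    ring
  calc (∑ ω, ∑ σ : Equiv.Perm (Fin n), ∑ τ : Equiv.Perm (Fin l), ∑ b : Fin l → U,
      μ ω / ((Fintype.card (Equiv.Perm (Fin n)) : ℝ) * (Fintype.card (Equiv.Perm (Fin l)) : ℝ) *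
          (Fintype.card (Fin l → U) : ℝ)) *
        (if q v (permAct τ (F ω (permAct σ v)) + b) = x ∧
            q v' (permAct τ (F ω (permAct σ v')) + b) = x' then 1 else 0))
      = ∑ ω, μ ω / ((Fintype.card (Equiv.Perm (Fin n)) : ℝ) *
          (Fintype.card (Equiv.Perm (Fin l)) : ℝ) * (Fintype.card (Fin l → U) : ℝ)) *
          ∑ σ : Equiv.Perm (Fin n), ∑ τ : Equiv.Perm (Fin l), ∑ u ∈ A, ∑ u' ∈ A',
            (if permAct τ (F ω (permAct σ (v' - v))) = u' - u then (1:ℝ) else 0) := by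
        refine Finset.sum_congr rfl fun ω _ => ?_
        simp only [← Finset.mul_sum]
        congr 1
        exact Finset.sum_congr rfl fun σ _ => Finset.sum_congr rfl fun τ _ => hA ω σ τ
    _ = ∑ ω, μ ω / ((Fintype.card (Equiv.Perm (Fin n)) : ℝ) *
          (Fintype.card (Equiv.Perm (Fin l)) : ℝ) * (Fintype.card (Fin l → U) : ℝ)) *
          ∑ u ∈ A, ∑ u' ∈ A', (stabC (v' - v) : ℝ) * (stabC (u' - u) : ℝ) *
            ((univ.filter fun z : Fin n → V =>
                empDist z = empDist (v' - v) ∧ empDist (F ω z) = empDist (u' - u)).card : ℝ) := by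
        refine Finset.sum_congr rfl fun ω _ => ?_
        congr 1
        rw [sum_swap4]
        exact Finset.sum_congr rfl fun u _ => Finset.sum_congr rfl fun u' _ => hN ω (u' - u)
    _ = ∑ u ∈ A, ∑ u' ∈ A',
          (stabC (v' - v) : ℝ) * (stabC (u' - u) : ℝ) *
            (∑ ω, μ ω * ((univ.filter fun z : Fin n → V =>
                empDist z = empDist (v' - v) ∧ empDist (F ω z) = empDist (u' - u)).card : ℝ))
          / ((Fintype.card (Equiv.Perm (Fin n)) : ℝ) *
              (Fintype.card (Equiv.Perm (Fin l)) : ℝ) * (Fintype.card (Fin l → U) : ℝ)) := by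
        simp only [Finset.mul_sum]
        rw [Finset.sum_comm]
        refine Finset.sum_congr rfl fun u _ => ?_
        rw [Finset.sum_comm]
        refine Finset.sum_congr rfl fun u' _ => ?_
        rw [Finset.sum_div]
        exact Finset.sum_congr rfl fun ω _ => by ring


end Main

theorem stmt12 {V U Xc : Type*} [Fintype V] [Fintype U] [Fintype Xc]
    [AddCommGroup V] [AddCommGroup U] {n l k : ℕ} {Ω : Type*} [Fintype Ω] (μ : Ω → ℝ)
    (hμ0 : ∀ ω, 0 ≤ μ ω) (hμ1 : ∑ ω, μ ω = 1)
    (F : Ω → ((Fin n → V) →+ (Fin l → U)))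
    (q : (Fin n → V) → (Fin l → U) → (Fin k → Xc))
    (v v' : Fin n → V) (hv : v ≠ v') (x x' : Fin k → Xc)
    (h1 : (univ.filter fun u : Fin l → U => q v u = x).Nonempty)
    (h2 : (univ.filter fun u : Fin l → U => q v' u = x').Nonempty) :
    prPhi2 μ F q v v' x x' / prPhi μ F q v x
      = ((∑ u ∈ univ.filter (fun u : Fin l → U => q v u = x),
            ∑ u' ∈ univ.filter (fun u : Fin l → U => q v' u = x'),
              alphaE μ (fun ω => ⇑(F ω)) (empDist (v' - v)) (empDist (u' - u))) /
            (((univ.filter fun u : Fin l → U => q v u = x).card : ℝ) *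
              ((univ.filter fun u : Fin l → U => q v' u = x').card : ℝ))) *
          (((univ.filter fun u : Fin l → U => q v' u = x').card : ℝ) /
            (Fintype.card U : ℝ) ^ l) := by
  classical
  rw [prPhi2_eq μ F q v v' x x', prPhi_eq μ hμ1 F q v x]
  have hUlF : ((Fintype.card (Fin l → U) : ℕ) : ℝ) = (Fintype.card U : ℝ) ^ l := by
    simp [Fintype.card_fun]
  have hAc : ((univ.filter fun u : Fin l → U => q v u = x).card : ℝ) ≠ 0 := by
    exact_mod_cast (Finset.card_pos.2 h1).ne'
  have hA'c : ((univ.filter fun u : Fin l → U => q v' u = x').card : ℝ) ≠ 0 := by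
    exact_mod_cast (Finset.card_pos.2 h2).ne'
  have hUl0 : (Fintype.card U : ℝ) ^ l ≠ 0 := by positivity
  have hVn0 : (Fintype.card V : ℝ) ^ n ≠ 0 := by positivity
  simp only [Finset.sum_div, Finset.sum_mul]
  refine Finset.sum_congr rfl fun u hu => ?_
  refine Finset.sum_congr rfl fun u' hu' => ?_
  have hVn : (((univ : Finset (Fin n → V)).card : ℕ) : ℝ) = (Fintype.card V : ℝ) ^ n := by
    simp [Finset.card_univ, Fintype.card_fun]
  have hUl2 : (((univ : Finset (Fin l → U)).card : ℕ) : ℝ) = (Fintype.card U : ℝ) ^ l := by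
    simp [Finset.card_univ, Fintype.card_fun]
  have htD0 : ((tC (v' - v) : ℕ) : ℝ) ≠ 0 := by exact_mod_cast (tC_pos _).ne'
  have htE0 : ((tC (u' - u) : ℕ) : ℝ) ≠ 0 := by exact_mod_cast (tC_pos _).ne'
  have hsD0 : ((stabC (v' - v) : ℕ) : ℝ) ≠ 0 := by exact_mod_cast (stabC_pos _).ne'
  have hsE0 : ((stabC (u' - u) : ℕ) : ℝ) ≠ 0 := by exact_mod_cast (stabC_pos _).ne'
  have halpha : alphaE μ (fun ω => ⇑(F ω)) (empDist (v' - v)) (empDist (u' - u))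
      = (∑ ω, μ ω * ((univ.filter fun z : Fin n → V =>
            empDist z = empDist (v' - v) ∧ empDist (F ω z) = empDist (u' - u)).card : ℝ))
          * (Fintype.card U : ℝ) ^ l / ((tC (v' - v) : ℝ) * (tC (u' - u) : ℝ)) := by
    simp only [alphaE, jointSpec, fullJointSpec, specS]
    rw [hVn, hUl2]
    simp only [← mul_div_assoc]
    rw [← Finset.sum_div]
    have htD : ((univ.filter fun z : Fin n → V => empDist z = empDist (v' - v)).card : ℝ)
        = (tC (v' - v) : ℝ) := rfl
    have htE : ((univ.filter fun w : Fin l → U => empDist w = empDist (u' - u)).card : ℝ)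
        = (tC (u' - u) : ℝ) := rfl
    rw [htD, htE]
    field_simp
  rw [halpha]
  rw [show ((Fintype.card (Fin l → U) : ℕ) : ℝ) = (Fintype.card U : ℝ) ^ l from hUlF]
  rw [show ((Fintype.card (Equiv.Perm (Fin n)) : ℕ) : ℝ)
      = ((stabC (v' - v) : ℕ) : ℝ) * ((tC (v' - v) : ℕ) : ℝ) by
    exact_mod_cast congrArg (Nat.cast (R := ℝ)) (stab_mul_tC (v' - v)).symm]
  rw [show ((Fintype.card (Equiv.Perm (Fin l)) : ℕ) : ℝ)
      = ((stabC (u' - u) : ℕ) : ℝ) * ((tC (u' - u) : ℕ) : ℝ) by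
    exact_mod_cast congrArg (Nat.cast (R := ℝ)) (stab_mul_tC (u' - u)).symm]
  field_simp
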